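/- Let a, b, c ∈ ℝ and let u : ℝ → ℤ → ℝ be differentiable in t and satisfy u̇ₙ = (uₙ₊₁ − uₙ + a)(uₙ − uₙ₋₁ + a)(uₙ₊₂ − uₙ₋₂ + 4a + c) + b. Define v t n = u t (n+1) − u t n + a. Then v satisfies v̇ₙ = vₙ[vₙ₊₁(vₙ₊₂ + vₙ₊₁ + vₙ) − vₙ₋₁(vₙ + vₙ₋₁ + vₙ₋₂)] + c′ vₙ(vₙ₊₁ − vₙ₋₁) for some constant c′ depending only on a and c. -/

import Mathlib

/-- Transformation T1 maps equation (E5) to an equation of the form (E3),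
for some constant c' depending only on a and c. -/
theorem stmt_9 (a b c : ℝ) (u v : ℝ → ℤ → ℝ)
    (hu : ∀ t n, HasDerivAt (fun s => u s n)
      ((u t (n + 1) - u t n + a) * (u t n - u t (n - 1) + a) *
        (u t (n + 2) - u t (n - 2) + 4 * a + c) + b) t)
    (hv : ∀ t n, v t n = u t (n + 1) - u t n + a) :
    ∃ c' : ℝ, ∀ t n, HasDerivAt (fun s => v s n)
      (v t n * (v t (n + 1) * (v t (n + 2) + v t (n + 1) + v t n) -
        v t (n - 1) * (v t n + v t (n - 1) + v t (n - 2))) +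
        c' * v t n * (v t (n + 1) - v t (n - 1))) t := by
  refine ⟨c, fun t n => ?_⟩
  have h2 : (fun s => v s n) = fun s => u s (n + 1) - u s n + a :=
    funext fun s => hv s n
  rw [h2]
  have h1 := ((hu t (n + 1)).sub (hu t n)).add_const a
  convert h1 using 1
  · rfl
  · rfl
  · rfl
  simp only [hv]
  simp only [show n + 1 + 1 = n + 2 from by ring, show (n : ℤ) + 1 - 1 = n from by ring,
    show n + 1 + 2 = n + 3 from by ring, show (n : ℤ) + 1 - 2 = n - 1 from by ring,
    show n + 2 + 1 = n + 3 from by ring, show (n : ℤ) - 1 + 1 = n from by ring,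
    show (n : ℤ) - 2 + 1 = n - 1 from by ring]
  ring
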